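/- Let (u_n) ⊂ BV(ℝ^N) satisfy Φ(u_n) → c and 𝒥(v) - 𝒥(u_n) ≥ ∫ f(u_n)(v - u_n)dx - ε_n‖v - u_n‖ for all v ∈ BV(ℝ^N), with ε_n → 0, where Φ(u) = 𝒥(u) - ∫F(u)dx, 𝒥(u) = ∫|Du| + ∫|u|dx, and f satisfies the Ambrosetti–Rabinowitz condition 0 < θF(s) ≤ f(s)s for s ≠ 0 with θ > 1. Then (u_n) is bounded in BV(ℝ^N). -/

import Mathlib

open MeasureTheory Metric Set Filter

noncomputable section

def divg {N : ℕ} (φ : EuclideanSpace ℝ (Fin N) → EuclideanSpace ℝ (Fin N))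
    (x : EuclideanSpace ℝ (Fin N)) : ℝ :=
  ∑ i, fderiv ℝ (fun y => φ y i) x (EuclideanSpace.single i 1)

/-- The set of values `∫ u · div φ` over admissible test fields `φ`. -/
def divSet {N : ℕ} (u : EuclideanSpace ℝ (Fin N) → ℝ) : Set ℝ :=
  {r | ∃ φ : EuclideanSpace ℝ (Fin N) → EuclideanSpace ℝ (Fin N),
    ContDiff ℝ 1 φ ∧ HasCompactSupport φ ∧ (∀ x, ‖φ x‖ ≤ 1) ∧
    r = ∫ x, u x * divg φ x}

/-- `u ∈ BV(ℝᴺ)`: integrable with finite total variation. -/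
def IsBV {N : ℕ} (u : EuclideanSpace ℝ (Fin N) → ℝ) : Prop :=
  Integrable u ∧ BddAbove (divSet u)

/-- Total variation `∫ |Du|`. -/
def totalVar {N : ℕ} (u : EuclideanSpace ℝ (Fin N) → ℝ) : ℝ := sSup (divSet u)

/-- BV norm `∫|Du| + ∫|u|`. -/
def bvNorm {N : ℕ} (u : EuclideanSpace ℝ (Fin N) → ℝ) : ℝ :=
  totalVar u + ∫ x, |u x|

def IsRadial {N : ℕ} (u : EuclideanSpace ℝ (Fin N) → ℝ) : Prop :=
  ∀ x y : EuclideanSpace ℝ (Fin N), ‖x‖ = ‖y‖ → u x = u y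


lemma zero_mem_divSet {N : ℕ} (u : EuclideanSpace ℝ (Fin N) → ℝ) :
    (0 : ℝ) ∈ divSet u := by
  refine ⟨fun _ => 0, contDiff_const, ?_, fun x => by simp, ?_⟩
  · simpa [HasCompactSupport] using isCompact_empty.closure_of_subset (by simp [Function.support])
  · have : ∀ x : EuclideanSpace ℝ (Fin N), divg (fun _ => 0) x = 0 := by
      intro x
      unfold divg
      simp
    simp [this]

lemma divg_neg {N : ℕ} (φ : EuclideanSpace ℝ (Fin N) → EuclideanSpace ℝ (Fin N))
    (x : EuclideanSpace ℝ (Fin N)) : divg (fun y => -(φ y)) x = -divg φ x := by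
  unfold divg
  rw [← Finset.sum_neg_distrib]
  congr 1
  ext i
  have : (fun y => (-(φ y)) i) = fun y => -(φ y i) := by ext y; simp
  rw [this, fderiv_fun_neg]
  simp

lemma divSet_neg_subset {N : ℕ} (u : EuclideanSpace ℝ (Fin N) → ℝ) :
    divSet u ⊆ divSet (fun x => -(u x)) := by
  rintro r ⟨φ, h1, h2, h3, rfl⟩
  refine ⟨fun y => -(φ y), h1.neg, h2.neg, fun x => by simpa using h3 x, ?_⟩
  congr 1
  ext x
  rw [divg_neg]
  ring

lemma divSet_neg {N : ℕ} (u : EuclideanSpace ℝ (Fin N) → ℝ) :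
    divSet (fun x => -(u x)) = divSet u := by
  apply Subset.antisymm
  · have := divSet_neg_subset (fun x => -(u x))
    simpa using this
  · exact divSet_neg_subset u

lemma bvNorm_neg {N : ℕ} (u : EuclideanSpace ℝ (Fin N) → ℝ) :
    bvNorm (fun x => -(u x)) = bvNorm u := by
  unfold bvNorm totalVar
  rw [divSet_neg]
  simp

lemma divSet_two {N : ℕ} (u : EuclideanSpace ℝ (Fin N) → ℝ) :
    divSet (fun x => 2 * u x) = (fun r => 2 * r) '' divSet u := by
  ext r
  constructor
  · rintro ⟨φ, h1, h2, h3, rfl⟩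
    refine ⟨∫ x, u x * divg φ x, ⟨φ, h1, h2, h3, rfl⟩, ?_⟩
    show 2 * (∫ x, u x * divg φ x) = ∫ x, (2 * u x) * divg φ x
    rw [← integral_const_mul (2:ℝ)]
    congr 1; ext x; ring
  · rintro ⟨s, ⟨φ, h1, h2, h3, rfl⟩, rfl⟩
    refine ⟨φ, h1, h2, h3, ?_⟩
    show 2 * (∫ x, u x * divg φ x) = ∫ x, (2 * u x) * divg φ x
    rw [← integral_const_mul (2:ℝ)]
    congr 1; ext x; ring

lemma sSup_two_image (S : Set ℝ) (hne : S.Nonempty) (hbdd : BddAbove S) :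
    sSup ((fun r => 2 * r) '' S) = 2 * sSup S := by
  obtain ⟨b, hb⟩ := hbdd
  have hbdd2 : BddAbove ((fun r => 2 * r) '' S) := by
    refine ⟨2 * b, ?_⟩
    rintro _ ⟨r, hr, rfl⟩
    have := hb hr
    dsimp only
    linarith
  apply le_antisymm
  · apply csSup_le (hne.image _)
    rintro _ ⟨r, hr, rfl⟩
    have := le_csSup ⟨b, hb⟩ hr
    dsimp only
    linarith
  · have : sSup S ≤ sSup ((fun r => 2 * r) '' S) / 2 := by
      apply csSup_le hne
      intro r hr
      have := le_csSup hbdd2 (mem_image_of_mem _ hr)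
      linarith
    linarith

lemma bvNorm_two {N : ℕ} (u : EuclideanSpace ℝ (Fin N) → ℝ) (h : IsBV u) :
    bvNorm (fun x => 2 * u x) = 2 * bvNorm u := by
  unfold bvNorm totalVar
  rw [divSet_two, sSup_two_image _ ⟨0, zero_mem_divSet u⟩ h.2]
  have : (∫ x, |2 * u x|) = 2 * ∫ x, |u x| := by
    rw [← integral_const_mul (2:ℝ)]
    congr 1; ext x
    rw [abs_mul]; norm_num
  rw [this]; ring

lemma isBV_two {N : ℕ} (u : EuclideanSpace ℝ (Fin N) → ℝ) (h : IsBV u) :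
    IsBV (fun x => 2 * u x) := by
  refine ⟨h.1.const_mul 2, ?_⟩
  rw [divSet_two]
  obtain ⟨b, hb⟩ := h.2
  refine ⟨2 * b, ?_⟩
  rintro _ ⟨r, hr, rfl⟩
  have := hb hr
  dsimp only
  linarith

lemma divSet_zero {N : ℕ} : divSet (fun _ : EuclideanSpace ℝ (Fin N) => (0:ℝ)) = {0} := by
  apply Subset.antisymm
  · rintro r ⟨φ, h1, h2, h3, rfl⟩
    simp
  · rintro r (rfl : r = 0)
    exact zero_mem_divSet _

lemma isBV_zero {N : ℕ} : IsBV (fun _ : EuclideanSpace ℝ (Fin N) => (0:ℝ)) := by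
  refine ⟨integrable_zero _ _ _, ?_⟩
  rw [divSet_zero]
  exact bddAbove_singleton

lemma bvNorm_zero {N : ℕ} : bvNorm (fun _ : EuclideanSpace ℝ (Fin N) => (0:ℝ)) = 0 := by
  unfold bvNorm totalVar
  rw [divSet_zero]
  simp

lemma bvNorm_nonneg {N : ℕ} (u : EuclideanSpace ℝ (Fin N) → ℝ) (h : IsBV u) :
    0 ≤ bvNorm u := by
  unfold bvNorm totalVar
  have h1 : 0 ≤ sSup (divSet u) := le_csSup h.2 (zero_mem_divSet u)
  have h2 : 0 ≤ ∫ x, |u x| := integral_nonneg fun x => abs_nonneg _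
  linarith

theorem mp_sequence_bounded {N : ℕ} (hN : 2 ≤ N)
    (f F : ℝ → ℝ) (hf : Continuous f)
    (hFdef : ∀ s : ℝ, F s = ∫ t in (0 : ℝ)..s, f t)
    (θ : ℝ) (hθ : 1 < θ)
    (hAR : ∀ s : ℝ, s ≠ 0 → 0 < θ * F s ∧ θ * F s ≤ f s * s)
    (u : ℕ → EuclideanSpace ℝ (Fin N) → ℝ) (hbv : ∀ n, IsBV (u n))
    (ε : ℕ → ℝ) (hεpos : ∀ n, 0 ≤ ε n) (hε : Tendsto ε atTop (nhds 0))
    (c : ℝ)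
    (hΦ : Tendsto (fun n => bvNorm (u n) - ∫ x, F (u n x)) atTop (nhds c))
    (hineq : ∀ n, ∀ v : EuclideanSpace ℝ (Fin N) → ℝ, IsBV v →
      bvNorm v - bvNorm (u n) ≥
        (∫ x, f (u n x) * (v x - u n x)) - ε n * bvNorm (v - u n)) :
    ∃ C : ℝ, ∀ n, bvNorm (u n) ≤ C := by
  have hF0 : F 0 = 0 := by rw [hFdef]; simp
  -- bound on Φ
  obtain ⟨M, hM⟩ : ∃ M, ∀ n, bvNorm (u n) - (∫ x, F (u n x)) ≤ M := by
    obtain ⟨M, hM⟩ := hΦ.bddAbove_range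
    exact ⟨M, fun n => hM (Set.mem_range_self n)⟩
  set M' : ℝ := max M 0 with hM'
  have hM'0 : 0 ≤ M' := le_max_right _ _
  set C₀ : ℝ := max M (2 * θ * M' / (θ - 1)) with hC₀
  have hC₀0 : 0 ≤ C₀ := le_trans (div_nonneg (by nlinarith) (by linarith)) (le_max_right _ _)
  -- eventual smallness of ε
  set δ : ℝ := min (1/2) ((θ - 1)/2) with hδ
  have hδpos : 0 < δ := lt_min (by norm_num) (by linarith)
  obtain ⟨N₀, hN₀⟩ := eventually_atTop.1 (hε.eventually (eventually_lt_nhds hδpos))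
  -- the key estimate
  have key : ∀ n, ε n < δ → bvNorm (u n) ≤ C₀ := by
    intro n hδn
    have hε1 : ε n ≤ 1/2 := le_of_lt (lt_of_lt_of_le hδn (min_le_left _ _))
    have hεθ : ε n ≤ (θ - 1)/2 := le_of_lt (lt_of_lt_of_le hδn (min_le_right _ _))
    have hun0 : 0 ≤ bvNorm (u n) := bvNorm_nonneg _ (hbv n)
    -- test with v = 2 uₙ
    have h2 := hineq n (fun x => 2 * u n x) (isBV_two _ (hbv n))
    rw [bvNorm_two _ (hbv n)] at h2
    have e1 : (fun x => 2 * u n x) - u n = u n := by funext x; show 2 * u n x - u n x = u n x; ring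
    rw [e1] at h2
    have e2 : (∫ x, f (u n x) * ((fun x => 2 * u n x) x - u n x)) = ∫ x, f (u n x) * u n x := by
      congr 1; funext x; show f (u n x) * (2 * u n x - u n x) = _; ring
    rw [e2] at h2
    have hB_le : (∫ x, f (u n x) * u n x) ≤ (1 + ε n) * bvNorm (u n) := by linarith
    -- test with v = 0
    have h0 := hineq n (fun _ => 0) isBV_zero
    rw [bvNorm_zero] at h0
    have e3 : (fun _ : EuclideanSpace ℝ (Fin N) => (0:ℝ)) - u n = fun x => -(u n x) := by
      funext x; show 0 - u n x = -(u n x); ring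
    rw [e3, bvNorm_neg] at h0
    have e4 : (∫ x, f (u n x) * ((fun _ : EuclideanSpace ℝ (Fin N) => (0:ℝ)) x - u n x))
        = -∫ x, f (u n x) * u n x := by
      rw [← integral_neg]
      congr 1; funext x; show f (u n x) * (0 - u n x) = -(f (u n x) * u n x); ring
    rw [e4] at h0
    have hB_ge : (1 - ε n) * bvNorm (u n) ≤ ∫ x, f (u n x) * u n x := by linarith
    by_cases hFI : Integrable (fun x => F (u n x))
    · by_cases hfI : Integrable (fun x => f (u n x) * u n x)
      · -- the main case
        have hθA : θ * (∫ x, F (u n x)) ≤ ∫ x, f (u n x) * u n x := by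
          rw [← integral_const_mul θ]
          apply integral_mono (hFI.const_mul θ) hfI
          intro x
          by_cases hx : u n x = 0
          · simp [hx, hF0]
          · exact (hAR _ hx).2
        have h5 : bvNorm (u n) - (∫ x, F (u n x)) ≤ M := hM n
        have hgoal : bvNorm (u n) ≤ 2 * θ * M' / (θ - 1) := by
          rw [le_div_iff₀ (by linarith : (0:ℝ) < θ - 1)]
          have hMM' : M ≤ M' := le_max_left _ _
          nlinarith [mul_le_mul_of_nonneg_left h5 (show (0:ℝ) ≤ θ by linarith),
            mul_le_mul_of_nonneg_right hεθ hun0,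
            mul_le_mul_of_nonneg_left hMM' (show (0:ℝ) ≤ θ by linarith)]
        exact le_trans hgoal (le_max_right _ _)
      · -- f(u)·u not integrable: junk integral is 0
        have hB0 : (∫ x, f (u n x) * u n x) = 0 := integral_undef hfI
        rw [hB0] at hB_ge
        nlinarith
    · -- F(u) not integrable: junk integral is 0
      have hA0 : (∫ x, F (u n x)) = 0 := integral_undef hFI
      have := hM n
      rw [hA0] at this
      exact le_trans (by linarith) (le_max_left _ _)
  -- assemble the final bound
  classical
  set T : Finset ℝ := insert 0 ((Finset.range N₀).image (fun n => bvNorm (u n))) with hT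
  have hTne : T.Nonempty := ⟨0, Finset.mem_insert_self _ _⟩
  refine ⟨max C₀ (T.max' hTne), fun n => ?_⟩
  rcases lt_or_ge n N₀ with hn | hn
  · refine le_trans (Finset.le_max' T _ ?_) (le_max_right _ _)
    exact Finset.mem_insert_of_mem (Finset.mem_image_of_mem _ (Finset.mem_range.2 hn))
  · exact le_trans (key n (hN₀ n hn)) (le_max_left _ _)
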